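/- Assume Assumptions A1 and A2 hold. Then a family σ_Λ of states on the subsystems X ∈ Λ satisfies σ_Λ ∉ C_{R|T,Λ} if and only if for every family 𝒰 = (U_{i|X})_{X∈Λ, 1≤i≤d_X+1} of unitary matrices on the subsystems X there exists a strictly positive subchannel discrimination task D for 𝒰 such that sup_{τ_Λ ∈ C_{R|T,Λ}} P_D(τ_Λ, 𝒰) < P_D(σ_Λ, 𝒰). -/

import Mathlib

open scoped ComplexOrder ENNReal Kronecker Matrix

namespace RMP

variable {ι : Type} [Fintype ι] [DecidableEq ι]
variable (d : ι → Type) [∀ i, Fintype (d i)] [∀ i, DecidableEq (d i)] [∀ i, Nonempty (d i)]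

/-- The space of matrices on the global system. -/
abbrev GlobalMat : Type := Matrix (∀ i, d i) (∀ i, d i) ℂ

/-- The space of matrices on the subsystem `X`. -/
abbrev SubMat (X : Finset ι) : Type :=
  Matrix (∀ i : X, d i.1) (∀ i : X, d i.1) ℂ

/-- A quantum state: positive semidefinite with unit trace. -/
def IsState {m : Type} [Fintype m] (ρ : Matrix m m ℂ) : Prop :=
  ρ.PosSemidef ∧ ρ.trace = 1

/-- Combine an assignment on `X` with an assignment on its complement. -/
def combine (X : Finset ι) (a : ∀ i : X, d i.1) (c : ∀ i : (Xᶜ : Finset ι), d i.1) :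
    ∀ i, d i := fun i =>
  if h : i ∈ X then a ⟨i, h⟩ else c ⟨i, Finset.mem_compl.mpr h⟩

/-- Partial trace onto subsystem `X`. -/
noncomputable def ptrace (X : Finset ι) (ρ : GlobalMat d) : SubMat d X :=
  Matrix.of fun a b =>
    ∑ c : ∀ i : (Xᶜ : Finset ι), d i.1, ρ (combine d X a c) (combine d X b c)

variable (Λ : Finset (Finset ι)) (T : Finset ι) (F : Set (SubMat d T))

/-- The set `C_{R|T,Λ}` of `R`-free compatible families of marginals. -/
def CRT : Set (∀ X : Λ, SubMat d X.1) :=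
  {σ | ∃ ρ : GlobalMat d, IsState ρ ∧ (∀ X : Λ, ptrace d X.1 ρ = σ X) ∧ ptrace d T ρ ∈ F}

/-- The cone `𝒞_{R|T}`. -/
def coneRT : Set (GlobalMat d) :=
  {V | ∃ α : ℝ, 0 ≤ α ∧ ∃ η : GlobalMat d, IsState η ∧ ptrace d T η ∈ F ∧ V = α • η}

/-- A proper cone of global matrices. -/
def IsProperCone (C : Set (GlobalMat d)) : Prop :=
  C.Nonempty ∧ Convex ℝ C ∧ IsClosed C ∧
    (∀ (α : ℝ) (V : GlobalMat d), 0 ≤ α → V ∈ C → α • V ∈ C) ∧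
    (∀ V : GlobalMat d, V ∈ C → -V ∈ C → V = 0)

/-- The primal value `t(σ_Λ)`. -/
noncomputable def primal (σ : ∀ X : Λ, SubMat d X.1) : ℝ≥0∞ :=
  sInf {t | ∃ V ∈ coneRT d T F,
    (∀ X : Λ, (ptrace d X.1 V - σ X).PosSemidef) ∧ t = ENNReal.ofReal V.trace.re}

/-- The dual value `s(σ_Λ)`. -/
noncomputable def dual (σ : ∀ X : Λ, SubMat d X.1) : ℝ≥0∞ :=
  sSup {s | ∃ Y : ∀ X : Λ, SubMat d X.1,
    (∀ X : Λ, (Y X).PosSemidef) ∧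
    (∀ τ ∈ CRT d Λ T F, (∑ X : Λ, (τ X * Y X).trace.re) ≤ 1) ∧
    s = ENNReal.ofReal (∑ X : Λ, (σ X * Y X).trace.re)}

end RMP

set_option linter.unusedSectionVars false
set_option linter.unusedVariables false
set_option linter.deprecated false
set_option linter.unusedTactic false

namespace RMP
section Aux
variable {ι : Type} [Fintype ι] [DecidableEq ι]
variable (d : ι → Type) [∀ i, Fintype (d i)] [∀ i, DecidableEq (d i)] [∀ i, Nonempty (d i)]

lemma combine_mem (X : Finset ι) (a : ∀ i : X, d i.1) (c : ∀ i : (Xᶜ : Finset ι), d i.1)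
    (i : X) : combine d X a c i.1 = a i := by
  have h : (i : ι) ∈ X := i.2
  simp [combine, h]

lemma combine_not_mem (X : Finset ι) (a : ∀ i : X, d i.1) (c : ∀ i : (Xᶜ : Finset ι), d i.1)
    (i : (Xᶜ : Finset ι)) : combine d X a c i.1 = c i := by
  have h : (i : ι) ∉ X := Finset.mem_compl.mp i.2
  simp [combine, h]

def combineEquiv (X : Finset ι) :
    ((∀ i : X, d i.1) × (∀ i : (Xᶜ : Finset ι), d i.1)) ≃ (∀ i, d i) where
  toFun p := combine d X p.1 p.2
  invFun j := (fun i => j i.1, fun i => j i.1)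
  left_inv p := by
    ext i
    · exact combine_mem d X p.1 p.2 i
    · exact combine_not_mem d X p.1 p.2 i
  right_inv j := by
    funext i
    by_cases h : i ∈ X <;> simp [combine, h]

lemma ptrace_apply (X : Finset ι) (ρ : GlobalMat d) (a b : ∀ i : X, d i.1) :
    ptrace d X ρ a b = ∑ c : ∀ i : (Xᶜ : Finset ι), d i.1,
      ρ (combine d X a c) (combine d X b c) := rfl

lemma ptrace_add (X : Finset ι) (ρ η : GlobalMat d) :
    ptrace d X (ρ + η) = ptrace d X ρ + ptrace d X η := by
  ext a b
  simp [ptrace_apply, Finset.sum_add_distrib]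

lemma ptrace_realSmul (X : Finset ι) (r : ℝ) (ρ : GlobalMat d) :
    ptrace d X (r • ρ) = r • ptrace d X ρ := by
  ext a b
  simp [ptrace_apply, Finset.smul_sum]

lemma sum_global {M : Type*} [AddCommMonoid M] (X : Finset ι) (g : (∀ i, d i) → M) :
    ∑ j, g j = ∑ a : ∀ i : X, d i.1, ∑ c : ∀ i : (Xᶜ : Finset ι), d i.1,
      g (combine d X a c) := by
  rw [← Equiv.sum_comp (combineEquiv d X) g, Fintype.sum_prod_type]
  rfl

lemma trace_ptrace (X : Finset ι) (ρ : GlobalMat d) :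
    (ptrace d X ρ).trace = ρ.trace := by
  rw [Matrix.trace, Matrix.trace, sum_global d X (fun j => Matrix.diag ρ j)]
  simp [ptrace_apply, Matrix.diag]

lemma ptrace_isHermitian (X : Finset ι) {ρ : GlobalMat d} (hρ : ρ.IsHermitian) :
    (ptrace d X ρ).IsHermitian := by
  ext a b
  simp only [Matrix.conjTranspose_apply, ptrace_apply, star_sum]
  refine Finset.sum_congr rfl fun c _ => ?_
  exact congrFun (congrFun hρ _) _

lemma ptrace_posSemidef (X : Finset ι) {ρ : GlobalMat d} (hρ : ρ.PosSemidef) :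
    (ptrace d X ρ).PosSemidef := by
  refine Matrix.PosSemidef.of_dotProduct_mulVec_nonneg (ptrace_isHermitian d X hρ.1) fun x => ?_
  classical
  set y : (∀ i : (Xᶜ : Finset ι), d i.1) → (∀ i, d i) → ℂ := fun c j =>
    if (fun i : (Xᶜ : Finset ι) => j i.1) = c then x (fun i : X => j i.1) else 0 with hy
  have hy' : ∀ (c : ∀ i : (Xᶜ : Finset ι), d i.1) (b : ∀ i : X, d i.1)
      (c' : ∀ i : (Xᶜ : Finset ι), d i.1),
      y c (combine d X b c') = if c' = c then x b else 0 := by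
    intro c b c'
    have h1 : (fun i : (Xᶜ : Finset ι) => combine d X b c' i.1) = c' := by
      funext i; exact combine_not_mem d X b c' i
    have h2 : (fun i : X => combine d X b c' i.1) = b := by
      funext i; exact combine_mem d X b c' i
    rw [hy]; simp only [h1, h2]
  have key : dotProduct (star x) ((ptrace d X ρ).mulVec x)
      = ∑ c, dotProduct (star (y c)) (ρ.mulVec (y c)) := by
    trans ∑ c : ∀ i : (Xᶜ : Finset ι), d i.1, ∑ a, ∑ b,
      (starRingEnd ℂ) (x a) * (ρ (combine d X a c) (combine d X b c) * x b)
    · simp only [dotProduct, Matrix.mulVec, Pi.star_apply, ptrace_apply,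
        Finset.sum_mul, Finset.mul_sum, Complex.star_def]
      calc ∑ a, ∑ b, ∑ c : ∀ i : (Xᶜ : Finset ι), d i.1,
            (starRingEnd ℂ) (x a) * (ρ (combine d X a c) (combine d X b c) * x b)
          = ∑ a, ∑ c : ∀ i : (Xᶜ : Finset ι), d i.1, ∑ b,
            (starRingEnd ℂ) (x a) * (ρ (combine d X a c) (combine d X b c) * x b) :=
            Finset.sum_congr rfl fun a _ => Finset.sum_comm
        _ = ∑ c : ∀ i : (Xᶜ : Finset ι), d i.1, ∑ a, ∑ b,
            (starRingEnd ℂ) (x a) * (ρ (combine d X a c) (combine d X b c) * x b) :=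
            Finset.sum_comm
    · refine Finset.sum_congr rfl fun c _ => ?_
      simp only [dotProduct, Matrix.mulVec, Pi.star_apply, Complex.star_def]
      rw [sum_global d X (fun j => (starRingEnd ℂ) (y c j) * ∑ k, ρ j k * y c k)]
      refine Finset.sum_congr rfl fun a _ => ?_
      simp only [hy', apply_ite (starRingEnd ℂ), map_zero, ite_mul, zero_mul,
        Finset.sum_ite_eq', Finset.mem_univ, if_true]
      rw [sum_global d X (fun k => ρ (combine d X a c) k * y c k)]
      simp only [hy', mul_ite, mul_zero, Finset.sum_ite_eq', Finset.mem_univ, if_true,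
        Finset.mul_sum]
  rw [key]
  exact Finset.sum_nonneg fun c _ => hρ.dotProduct_mulVec_nonneg (y c)

lemma isState_ptrace (X : Finset ι) {ρ : GlobalMat d} (hρ : IsState ρ) :
    IsState (ptrace d X ρ) :=
  ⟨ptrace_posSemidef d X hρ.1, by rw [trace_ptrace]; exact hρ.2⟩

lemma continuous_ptrace (X : Finset ι) : Continuous (ptrace d X) := by
  apply continuous_pi; intro a; apply continuous_pi; intro b
  apply continuous_finset_sum
  intro c _
  exact (continuous_apply _).comp (continuous_apply _)


section States
variable {m : Type} [Fintype m] [DecidableEq m]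

lemma posSemidef_realSmul {ρ : Matrix m m ℂ} (hρ : ρ.PosSemidef) {r : ℝ} (hr : 0 ≤ r) :
    (r • ρ).PosSemidef := by
  refine Matrix.PosSemidef.of_dotProduct_mulVec_nonneg ?_ ?_
  · unfold Matrix.IsHermitian
    rw [Matrix.conjTranspose_smul, hρ.1, star_trivial]
  · intro x
    rw [Matrix.smul_mulVec, dotProduct_smul]
    have h0 : (0 : ℂ) ≤ (r : ℂ) := by
      rw [Complex.le_def]; simp [hr]
    calc (0:ℂ) = (r:ℂ) * 0 := by ring
      _ ≤ (r:ℂ) * (dotProduct (star x) (ρ.mulVec x)) :=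
          mul_le_mul_of_nonneg_left (hρ.dotProduct_mulVec_nonneg x) h0
      _ = r • (dotProduct (star x) (ρ.mulVec x)) := by
          rw [Complex.real_smul]

lemma diag_nonneg_of_posSemidef {ρ : Matrix m m ℂ} (hρ : ρ.PosSemidef) (a : m) :
    0 ≤ (ρ a a).re ∧ (ρ a a).im = 0 := by
  have h := hρ.dotProduct_mulVec_nonneg (Pi.single a 1)
  have hval : dotProduct (star (Pi.single a 1)) (ρ.mulVec (Pi.single a 1)) = ρ a a := by
    simp [dotProduct, Matrix.mulVec, Pi.single_apply, apply_ite, mul_ite, ite_mul,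
      mul_zero, zero_mul, Finset.sum_ite_eq', Finset.mem_univ]
  rw [hval, Complex.le_def] at h
  exact ⟨by simpa using h.1, by simpa using h.2.symm⟩

lemma diag_re_le_trace {ρ : Matrix m m ℂ} (hρ : ρ.PosSemidef) (a : m) :
    (ρ a a).re ≤ ρ.trace.re := by
  rw [Matrix.trace, Complex.re_sum]
  exact Finset.single_le_sum (f := fun i => ((ρ i i).re))
    (fun i _ => (diag_nonneg_of_posSemidef hρ i).1) (Finset.mem_univ a)

lemma trace_re_nonneg_of_posSemidef {ρ : Matrix m m ℂ} (hρ : ρ.PosSemidef) :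
    0 ≤ ρ.trace.re := by
  rw [Matrix.trace, Complex.re_sum]
  exact Finset.sum_nonneg fun i _ => (diag_nonneg_of_posSemidef hρ i).1

lemma entry_abs_le_trace {ρ : Matrix m m ℂ} (hρ : ρ.PosSemidef) (a b : m) :
    ‖ρ a b‖ ≤ ρ.trace.re := by
  by_cases hab : a = b
  · subst hab
    have h := diag_nonneg_of_posSemidef hρ a
    have hre : ρ a a = ((ρ a a).re : ℂ) := by
      apply Complex.ext <;> simp [h.2]
    rw [hre, Complex.norm_of_nonneg h.1]
    exact diag_re_le_trace hρ a
  · set w := ρ a b with hw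
    set r := ‖w‖ with hr
    rcases eq_or_lt_of_le (norm_nonneg w) with h0 | h0
    · rw [hr, ← h0]; exact trace_re_nonneg_of_posSemidef hρ
    set x : m → ℂ := fun i =>
      (if i = a then (r : ℂ) else 0) + (if i = b then -((starRingEnd ℂ) w) else 0) with hx
    have h := hρ.dotProduct_mulVec_nonneg x
    rw [← hr] at h0
    have hba : ρ b a = (starRingEnd ℂ) w := by
      have h' := congrFun (congrFun hρ.1 b) a
      rw [Matrix.conjTranspose_apply] at h'
      rw [← h']; rfl
    have hmc : w * (starRingEnd ℂ) w = (r:ℂ)^2 := by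
      rw [Complex.mul_conj, hr]
      norm_cast
      rw [Complex.sq_norm]
    have hS : dotProduct (star x) (ρ.mulVec x)
        = (r:ℂ)^2 * ρ a a + (r:ℂ)^2 * ρ b b - 2 * (r:ℂ)^3 := by
      have hg : ∀ i, (ρ.mulVec x) i = ρ i a * (r:ℂ) - ρ i b * (starRingEnd ℂ) w := by
        intro i
        simp only [Matrix.mulVec, dotProduct, hx, mul_add, mul_ite, mul_zero,
          Finset.sum_add_distrib, Finset.sum_ite_eq', Finset.mem_univ, if_true, mul_neg]
        ring
      have hstarx : star x = fun i =>
          (if i = a then (r:ℂ) else 0) + (if i = b then -w else 0) := by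
        funext i
        simp [hx, apply_ite (starRingEnd ℂ), Complex.star_def]
      rw [dotProduct]
      simp only [hstarx, hg, add_mul, ite_mul, zero_mul, Finset.sum_add_distrib,
        Finset.sum_ite_eq', Finset.mem_univ, if_true]
      rw [hba]
      linear_combination (ρ b b - 2*(r:ℂ)) * hmc
    rw [hS, Complex.le_def] at h
    have hre : 0 ≤ r^2 * (ρ a a).re + r^2 * (ρ b b).re - 2*r^3 := by
      have h1 := h.1
      have e1 : ((r:ℂ)^2 * ρ a a).re = r^2 * (ρ a a).re := by
        rw [← Complex.ofReal_pow, Complex.re_ofReal_mul]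
      have e2 : ((r:ℂ)^2 * ρ b b).re = r^2 * (ρ b b).re := by
        rw [← Complex.ofReal_pow, Complex.re_ofReal_mul]
      have e3 : ((2:ℂ) * (r:ℂ)^3).re = 2*r^3 := by
        have : (2:ℂ) * (r:ℂ)^3 = ((2*r^3 : ℝ) : ℂ) := by push_cast; ring
        rw [this, Complex.ofReal_re]
      simpa [Complex.add_re, Complex.sub_re, e1, e2, e3] using h1
    have ha' := diag_re_le_trace hρ a
    have hb' := diag_re_le_trace hρ b
    nlinarith [hre, mul_le_mul_of_nonneg_left ha' (sq_nonneg r),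
      mul_le_mul_of_nonneg_left hb' (sq_nonneg r), h0, mul_pos (mul_pos h0 h0) h0]

end States


section Topo
variable {m : Type} [Fintype m] [DecidableEq m]

lemma isClosed_setOf_posSemidef : IsClosed {ρ : Matrix m m ℂ | ρ.PosSemidef} := by
  have heq : {ρ : Matrix m m ℂ | ρ.PosSemidef}
      = {ρ : Matrix m m ℂ | ρ.IsHermitian} ∩
        ⋂ x : m → ℂ, {ρ | 0 ≤ dotProduct (star x) (ρ.mulVec x)} := by
    ext ρ
    simp [Matrix.posSemidef_iff_dotProduct_mulVec, Set.mem_iInter, Matrix.IsHermitian]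
  rw [heq]
  apply IsClosed.inter
  · exact isClosed_eq (continuous_id.matrix_conjTranspose) continuous_id
  · apply isClosed_iInter
    intro x
    have hc : Continuous fun ρ : Matrix m m ℂ => dotProduct (star x) (ρ.mulVec x) :=
      (continuous_const).dotProduct (continuous_id.matrix_mulVec continuous_const)
    have hcl : IsClosed {z : ℂ | 0 ≤ z} := by
      have hz : {z : ℂ | 0 ≤ z} = Complex.re ⁻¹' Set.Ici 0 ∩ Complex.im ⁻¹' {0} := by
        ext z
        simp [Complex.le_def, eq_comm]
      rw [hz]
      exact (isClosed_Ici.preimage Complex.continuous_re).inter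
        (isClosed_singleton.preimage Complex.continuous_im)
    exact hcl.preimage hc

lemma isClosed_setOf_isState : IsClosed {ρ : Matrix m m ℂ | IsState ρ} := by
  have heq : {ρ : Matrix m m ℂ | IsState ρ}
      = {ρ : Matrix m m ℂ | ρ.PosSemidef} ∩ {ρ | Matrix.trace ρ = 1} := by
    ext ρ; simp [IsState]
  rw [heq]
  exact isClosed_setOf_posSemidef.inter
    (isClosed_eq (continuous_id.matrix_trace) continuous_const)

lemma isCompact_setOf_isState : IsCompact {ρ : Matrix m m ℂ | IsState ρ} := by
  have hK : IsCompact (Set.univ.pi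
      (fun _ : m => Set.univ.pi fun _ : m => Metric.closedBall (0:ℂ) 1) :
        Set (Matrix m m ℂ)) :=
    isCompact_univ_pi fun _ => isCompact_univ_pi fun _ => isCompact_closedBall 0 1
  apply IsCompact.of_isClosed_subset hK isClosed_setOf_isState
  intro ρ hρ
  rw [Set.mem_univ_pi]
  intro a
  rw [Set.mem_univ_pi]
  intro b
  rw [Metric.mem_closedBall, dist_zero_right]
  have := entry_abs_le_trace hρ.1 a b
  rw [hρ.2] at this
  simpa using this

end Topo


section CRTfacts
variable (Λ : Finset (Finset ι)) (T : Finset ι) (F : Set (SubMat d T))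

lemma crt_mem_isState {τ : ∀ X : Λ, SubMat d X.1} (hτ : τ ∈ CRT d Λ T F) (X : Λ) :
    IsState (τ X) := by
  obtain ⟨ρ, h1, h2, _⟩ := hτ
  rw [← h2 X]
  exact isState_ptrace d X.1 h1

lemma crt_convex (hF : Convex ℝ F) : Convex ℝ (CRT d Λ T F) := by
  rintro τ1 ⟨ρ1, h1, hp1, hf1⟩ τ2 ⟨ρ2, h2, hp2, hf2⟩ a b ha hb hab
  refine ⟨a • ρ1 + b • ρ2, ⟨?_, ?_⟩, ?_, ?_⟩
  · exact Matrix.PosSemidef.add (posSemidef_realSmul h1.1 ha) (posSemidef_realSmul h2.1 hb)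
  · rw [Matrix.trace_add, Matrix.trace_smul, Matrix.trace_smul, h1.2, h2.2]
    rw [Complex.real_smul, Complex.real_smul, mul_one, mul_one]
    exact_mod_cast congrArg Complex.ofReal hab
  · intro X
    rw [ptrace_add, ptrace_realSmul, ptrace_realSmul, hp1 X, hp2 X]
    simp
  · rw [ptrace_add, ptrace_realSmul, ptrace_realSmul]
    exact hF hf1 hf2 ha hb hab

lemma crt_compact (hFc : IsCompact F) : IsCompact (CRT d Λ T F) := by
  have hmap : CRT d Λ T F = (fun (ρ : GlobalMat d) (X : Λ) => ptrace d X.1 ρ) ''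
      {ρ : GlobalMat d | IsState ρ ∧ ptrace d T ρ ∈ F} := by
    ext τ
    constructor
    · rintro ⟨ρ, h1, h2, h3⟩
      exact ⟨ρ, ⟨h1, h3⟩, funext fun X => h2 X⟩
    · rintro ⟨ρ, ⟨h1, h3⟩, rfl⟩
      exact ⟨ρ, h1, fun X => rfl, h3⟩
  rw [hmap]
  apply IsCompact.image
  · apply IsCompact.of_isClosed_subset isCompact_setOf_isState
    · exact isClosed_setOf_isState.inter (hFc.isClosed.preimage (continuous_ptrace d T))
    · intro ρ h
      exact h.1
  · exact continuous_pi fun X => continuous_ptrace d X.1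

end CRTfacts


section Rep

lemma stdBasis_split {n : Type} [Fintype n] [DecidableEq n] (a b : n) (z : ℂ) :
    Matrix.single a b z = z.re • Matrix.single a b (1:ℂ)
      + z.im • Matrix.single a b Complex.I := by
  ext a' b'
  simp only [Matrix.add_apply, Matrix.smul_apply, Matrix.single, Matrix.of_apply]
  by_cases h : a = a' ∧ b = b'
  · simp only [h, if_true, and_self]
    rw [Complex.real_smul, Complex.real_smul, mul_one]
    exact (Complex.re_add_im z).symm
  · simp [h]

lemma matrix_decomp {n : Type} [Fintype n] [DecidableEq n] (τ : Matrix n n ℂ) :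
    τ = ∑ a, ∑ b, ((τ a b).re • Matrix.single a b (1:ℂ)
      + (τ a b).im • Matrix.single a b Complex.I) := by
  conv_lhs => rw [Matrix.matrix_eq_sum_single τ]
  exact Finset.sum_congr rfl fun a _ => Finset.sum_congr rfl fun b _ => stdBasis_split a b _

lemma trace_mul_eq_sum {n : Type} [Fintype n] [DecidableEq n] (A B : Matrix n n ℂ) :
    (A * B).trace = ∑ a, ∑ b, A a b * B b a := by
  simp [Matrix.trace, Matrix.diag, Matrix.mul_apply]

lemma trace_conjTranspose_mul_re {n : Type} [Fintype n] [DecidableEq n]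
    (W : Matrix n n ℂ) {τ : Matrix n n ℂ} (hτ : τ.IsHermitian) :
    ((Wᴴ) * τ).trace.re = (W * τ).trace.re := by
  have h1 : (Wᴴ * τ) = (τᴴ * W)ᴴ := by
    rw [Matrix.conjTranspose_mul, Matrix.conjTranspose_conjTranspose]
  rw [h1, Matrix.trace_conjTranspose, hτ.eq, Matrix.trace_mul_comm]
  exact Complex.conj_re _

variable (Λ : Finset (Finset ι))

noncomputable def repW (f : (∀ X : Λ, SubMat d X.1) →L[ℝ] ℝ) (X : Λ) : SubMat d X.1 :=
  Matrix.of fun b a =>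
    ((f (Pi.single X (Matrix.single a b (1:ℂ))) : ℝ) : ℂ)
      - ((f (Pi.single X (Matrix.single a b Complex.I)) : ℝ) : ℂ) * Complex.I

lemma repW_spec (f : (∀ X : Λ, SubMat d X.1) →L[ℝ] ℝ) (τ : ∀ X : Λ, SubMat d X.1) :
    f τ = ∑ X : Λ, ((repW d Λ f X) * (τ X)).trace.re := by
  conv_lhs => rw [← Finset.univ_sum_single τ, map_sum]
  refine Finset.sum_congr rfl fun X _ => ?_
  have hPs : (Pi.single X (τ X) : ∀ X : Λ, SubMat d X.1)
      = ∑ a, ∑ b, ((τ X a b).re • (Pi.single X (Matrix.single a b (1:ℂ))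
          : ∀ X : Λ, SubMat d X.1)
        + (τ X a b).im • (Pi.single X (Matrix.single a b Complex.I)
          : ∀ X : Λ, SubMat d X.1)) := by
    funext X'
    by_cases h : X' = X
    · subst h
      simp only [Finset.sum_apply, Pi.add_apply, Pi.smul_apply, Pi.single_eq_same]
      exact matrix_decomp (τ X')
    · simp [Finset.sum_apply, Pi.single_eq_of_ne h]
  rw [hPs, map_sum]
  trans ∑ a, ∑ b, ((τ X a b).re * f (Pi.single X (Matrix.single a b (1:ℂ)))
      + (τ X a b).im * f (Pi.single X (Matrix.single a b Complex.I)))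
  · refine Finset.sum_congr rfl fun a _ => ?_
    rw [map_sum]
    refine Finset.sum_congr rfl fun b _ => ?_
    rw [map_add, map_smul, map_smul, smul_eq_mul, smul_eq_mul]
  · rw [trace_mul_eq_sum, Complex.re_sum, Finset.sum_comm]
    refine Finset.sum_congr rfl fun a _ => ?_
    rw [Complex.re_sum]
    refine Finset.sum_congr rfl fun b _ => ?_
    have hW : repW d Λ f X a b
        = ((f (Pi.single X (Matrix.single b a (1:ℂ))) : ℝ) : ℂ)
          - ((f (Pi.single X (Matrix.single b a Complex.I)) : ℝ) : ℂ) * Complex.I := rfl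
    rw [hW]
    simp only [Complex.sub_re, Complex.mul_re, Complex.ofReal_re, Complex.ofReal_im,
      Complex.I_re, Complex.I_im, Complex.sub_im, Complex.mul_im]
    ring

end Rep


section Construction
variable {n : Type} [Fintype n] [DecidableEq n]

lemma quadform_bound (H : Matrix n n ℂ) (x : n → ℂ) :
    ‖dotProduct (star x) (H.mulVec x)‖
      ≤ (∑ a, ∑ b, ‖H a b‖) * ∑ k, ‖x k‖ ^ 2 := by
  have habs : ∀ i j, ‖x i‖ * ‖x j‖
      ≤ ∑ k, ‖x k‖ ^ 2 := by
    intro i j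
    have h1 : ‖x i‖^2 ≤ ∑ k, ‖x k‖^2 :=
      Finset.single_le_sum (f := fun k => ‖x k‖^2)
        (fun k _ => sq_nonneg _) (Finset.mem_univ i)
    have h2 : ‖x j‖^2 ≤ ∑ k, ‖x k‖^2 :=
      Finset.single_le_sum (f := fun k => ‖x k‖^2)
        (fun k _ => sq_nonneg _) (Finset.mem_univ j)
    nlinarith [sq_nonneg (‖x i‖ - ‖x j‖)]
  have hd : dotProduct (star x) (H.mulVec x)
      = ∑ i, star x i * ∑ j, H i j * x j := rfl
  rw [hd]
  calc ‖∑ i, star x i * ∑ j, H i j * x j‖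
      ≤ ∑ i, ‖star x i * ∑ j, H i j * x j‖ := norm_sum_le _ _
    _ ≤ ∑ i, ∑ j, ‖H i j‖ * (‖x i‖ * ‖x j‖) := by
        refine Finset.sum_le_sum fun i _ => ?_
        rw [norm_mul]
        calc ‖star x i‖ * ‖∑ j, H i j * x j‖
            ≤ ‖x i‖ * ∑ j, ‖H i j‖ * ‖x j‖ := by
              rw [show ‖star x i‖ = ‖x i‖ by
                rw [Pi.star_apply]; exact Complex.norm_conj (x i)]
              refine mul_le_mul_of_nonneg_left ?_ (norm_nonneg _)
              refine (norm_sum_le _ _).trans (le_of_eq ?_)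
              exact Finset.sum_congr rfl fun j _ => norm_mul _ _
          _ = ∑ j, ‖H i j‖ * (‖x i‖ * ‖x j‖) := by
              rw [Finset.mul_sum]
              exact Finset.sum_congr rfl fun j _ => by ring
    _ ≤ ∑ i, ∑ j, ‖H i j‖ * ∑ k, ‖x k‖^2 := by
        refine Finset.sum_le_sum fun i _ => Finset.sum_le_sum fun j _ => ?_
        exact mul_le_mul_of_nonneg_left (habs i j) (norm_nonneg _)
    _ = (∑ a, ∑ b, ‖H a b‖) * ∑ k, ‖x k‖ ^ 2 := by
        rw [Finset.sum_mul]
        exact Finset.sum_congr rfl fun i _ => (Finset.sum_mul _ _ _).symm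

lemma hermitian_quadform_conj {B : Matrix n n ℂ} (hB : B.IsHermitian) (x : n → ℂ) :
    (starRingEnd ℂ) (dotProduct (star x) (B.mulVec x))
      = dotProduct (star x) (B.mulVec x) := by
  have hd : dotProduct (star x) (B.mulVec x)
      = ∑ i, ∑ j, (starRingEnd ℂ) (x i) * (B i j * x j) := by
    simp [dotProduct, Matrix.mulVec, Finset.mul_sum, Complex.star_def]
  rw [hd, map_sum]
  rw [Finset.sum_comm]
  refine Finset.sum_congr rfl fun j _ => ?_
  rw [map_sum]
  refine Finset.sum_congr rfl fun i _ => ?_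
  simp only [map_mul, Complex.conj_conj]
  have hBij : (starRingEnd ℂ) (B j i) = B i j := by
    have h' := congrFun (congrFun hB.eq i) j
    rw [Matrix.conjTranspose_apply] at h'
    exact h'
  rw [hBij]
  ring

lemma posDef_one_add_smul {B : Matrix n n ℂ} (hB : B.IsHermitian) (α γ : ℝ)
    (hα : 0 < α) (hγ : |γ| * (∑ a, ∑ b, ‖B a b‖) ≤ α / 2) :
    (α • (1 : Matrix n n ℂ) + γ • B).PosDef := by
  refine Matrix.PosDef.of_dotProduct_mulVec_pos ?_ ?_
  · unfold Matrix.IsHermitian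
    rw [Matrix.conjTranspose_add, Matrix.conjTranspose_smul, Matrix.conjTranspose_smul,
      Matrix.conjTranspose_one, hB.eq, star_trivial, star_trivial]
  · intro x hx
    set S := ∑ k, ‖x k‖ ^ 2 with hSdef
    have hS : 0 < S := by
      have hex : ∃ k, x k ≠ 0 := by
        by_contra hc
        push_neg at hc
        exact hx (funext hc)
      obtain ⟨k, hk⟩ := hex
      refine Finset.sum_pos' (fun k _ => sq_nonneg _) ⟨k, Finset.mem_univ k, ?_⟩
      have := norm_pos_iff.mpr hk
      positivity
    set w := dotProduct (star x) (B.mulVec x) with hwdef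
    have hxx : dotProduct (star x) x = (S : ℂ) := by
      rw [hSdef]
      push_cast
      rw [dotProduct]
      refine Finset.sum_congr rfl fun k _ => ?_
      rw [Pi.star_apply, Complex.star_def, ← Complex.normSq_eq_conj_mul_self,
        ← Complex.ofReal_pow, Complex.sq_norm]
    have hdot : dotProduct (star x) ((α • (1 : Matrix n n ℂ) + γ • B).mulVec x)
        = (α : ℂ) * (S : ℂ) + (γ : ℂ) * w := by
      rw [Matrix.add_mulVec, Matrix.smul_mulVec, Matrix.smul_mulVec,
        Matrix.one_mulVec, dotProduct_add, dotProduct_smul,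
        dotProduct_smul, hxx, hwdef]
      rw [Complex.real_smul, Complex.real_smul]
    rw [hdot]
    have hwim : w.im = 0 := by
      have := hermitian_quadform_conj hB x
      rw [← hwdef] at this
      exact Complex.conj_eq_iff_im.mp this
    have hwabs : ‖w‖ ≤ (∑ a, ∑ b, ‖B a b‖) * S := quadform_bound B x
    rw [Complex.lt_def]
    constructor
    · simp only [Complex.add_re, Complex.zero_re, Complex.mul_re, Complex.ofReal_re,
        Complex.ofReal_im, zero_mul, sub_zero, hwim, mul_zero]
      have hwre : |w.re| ≤ (∑ a, ∑ b, ‖B a b‖) * S :=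
        (Complex.abs_re_le_norm w).trans hwabs
      have h1 : |γ * w.re| ≤ (α/2) * S := by
        rw [abs_mul]
        calc |γ| * |w.re| ≤ |γ| * ((∑ a, ∑ b, ‖B a b‖) * S) :=
              mul_le_mul_of_nonneg_left hwre (abs_nonneg _)
          _ = (|γ| * (∑ a, ∑ b, ‖B a b‖)) * S := by ring
          _ ≤ (α/2) * S := mul_le_mul_of_nonneg_right hγ hS.le
      have h2 : -(α/2) * S ≤ γ * w.re := by
        have := neg_abs_le (γ * w.re)
        nlinarith
      nlinarith
    · simp [hwim]

end Construction


section Construction2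
variable {n : Type} [Fintype n] [DecidableEq n]

lemma trace_conjTranspose_mul_self_eq_zero_iff (B : Matrix n n ℂ) :
    (Bᴴ * B).trace = 0 ↔ B = 0 := by
  constructor
  · intro h
    have htr : (Bᴴ * B).trace = ((∑ j, ∑ i, Complex.normSq (B i j) : ℝ) : ℂ) := by
      rw [Matrix.trace]
      push_cast
      refine Finset.sum_congr rfl fun j _ => ?_
      rw [Matrix.diag, Matrix.mul_apply]
      refine Finset.sum_congr rfl fun i _ => ?_
      rw [Matrix.conjTranspose_apply, Complex.star_def, ← Complex.normSq_eq_conj_mul_self]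
    rw [htr] at h
    norm_cast at h
    have hz := (Finset.sum_eq_zero_iff_of_nonneg (fun j _ =>
      Finset.sum_nonneg fun i _ => Complex.normSq_nonneg _)).mp h
    ext i j
    have hz2 := (Finset.sum_eq_zero_iff_of_nonneg
      (fun i _ => Complex.normSq_nonneg (B i j))).mp (hz j (Finset.mem_univ j))
    simpa using Complex.normSq_eq_zero.mp (hz2 i (Finset.mem_univ i))
  · intro h
    simp [h]

lemma conjTranspose_conj_mul (V M : Matrix n n ℂ) : (Vᴴ * M * V)ᴴ = Vᴴ * Mᴴ * V := by
  rw [Matrix.conjTranspose_mul, Matrix.conjTranspose_mul,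
    Matrix.conjTranspose_conjTranspose, ← Matrix.mul_assoc]

lemma construction {N : ℕ} (hN : 0 < N)
    (U : Fin (N+1) → Matrix n n ℂ) (hU : ∀ i, U i ∈ Matrix.unitaryGroup n ℂ)
    {Y : Matrix n n ℂ} (hY : Y.IsHermitian) :
    ∃ (q : Fin (N+1) → ℝ) (E : Fin (N+1) → Matrix n n ℂ) (c : ℝ),
      0 < c ∧ (∀ i, 0 < q i) ∧ (∑ i, q i) = 1 ∧ (∀ i, (E i).PosDef) ∧ (∑ i, E i) = 1 ∧
      ∑ i, q i • ((U i)ᴴ * E i * U i)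
        = ((N+1 : ℝ)⁻¹) • (1 : Matrix n n ℂ) + c • Y := by
  have hUs : ∀ i, (U i)ᴴ * U i = 1 := by
    intro i
    have h := (Unitary.mem_iff.mp (hU i)).1
    rwa [Matrix.star_eq_conjTranspose] at h
  set α : ℝ := (N+1 : ℝ)⁻¹ with hα
  have hαpos : 0 < α := by rw [hα]; positivity
  set ε : ℝ := α / 2 with hε
  have hεpos : 0 < ε := by rw [hε]; positivity
  set i0 : Fin (N+1) := 0 with hi0
  set i1 : Fin (N+1) := Fin.last N with hi1
  have hne : i0 ≠ i1 := by
    rw [hi0, hi1]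
    intro h
    have h2 := congrArg Fin.val h
    simp [Fin.last] at h2
    omega
  set q : Fin (N+1) → ℝ := fun i => α + (if i = i0 then ε else 0) - (if i = i1 then ε else 0)
    with hqdef
  have hq0 : q i0 = α + ε := by simp [hqdef, hne]
  have hq1 : q i1 = α - ε := by simp [hqdef, Ne.symm hne]
  have hqpos : ∀ i, 0 < q i := by
    intro i
    rw [hqdef]
    dsimp only
    split_ifs <;> nlinarith [hαpos, hεpos]
  have hqsum : ∑ i, q i = 1 := by
    rw [hqdef]
    rw [Finset.sum_sub_distrib, Finset.sum_add_distrib]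
    rw [Finset.sum_ite_eq' Finset.univ i0 (fun _ => ε),
      Finset.sum_ite_eq' Finset.univ i1 (fun _ => ε)]
    simp only [Finset.mem_univ, if_true, Finset.sum_const, Finset.card_univ,
      Fintype.card_fin, nsmul_eq_mul]
    rw [hα]
    push_cast
    have hNz : (N : ℝ) + 1 ≠ 0 := by positivity
    field_simp
    ring
  set T : Matrix n n ℂ →ₗ[ℝ] Matrix n n ℂ :=
    { toFun := fun B => q i0 • ((U i0)ᴴ * B * U i0) - q i1 • ((U i1)ᴴ * B * U i1)
      map_add' := by
        intro B1 B2
        simp only [Matrix.mul_add, Matrix.add_mul, smul_add]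
        abel
      map_smul' := by
        intro r B
        simp only [RingHom.id_apply]
        rw [Matrix.mul_smul, Matrix.smul_mul, smul_comm (q i0) r, Matrix.mul_smul,
          Matrix.smul_mul, smul_comm (q i1) r, smul_sub] } with hT
  have hTapply : ∀ B, T B = q i0 • ((U i0)ᴴ * B * U i0) - q i1 • ((U i1)ᴴ * B * U i1) :=
    fun B => rfl
  have htraceconj : ∀ (i : Fin (N+1)) (B : Matrix n n ℂ),
      (((U i)ᴴ * B * U i)ᴴ * ((U i)ᴴ * B * U i)).trace = (Bᴴ * B).trace := by
    intro i B
    have hVV : U i * (U i)ᴴ = 1 := mul_eq_one_comm.mp (hUs i)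
    rw [conjTranspose_conj_mul]
    have h2 : (U i)ᴴ * Bᴴ * U i * ((U i)ᴴ * B * U i) = (U i)ᴴ * (Bᴴ * B) * U i := by
      calc (U i)ᴴ * Bᴴ * U i * ((U i)ᴴ * B * U i)
          = (U i)ᴴ * Bᴴ * (U i * (U i)ᴴ) * (B * U i) := by noncomm_ring
        _ = (U i)ᴴ * (Bᴴ * B) * U i := by rw [hVV]; noncomm_ring
    rw [h2, Matrix.trace_mul_cycle, hVV, Matrix.one_mul]
  have hTinj : Function.Injective T := by
    refine (injective_iff_map_eq_zero T).mpr fun B hB => ?_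
    rw [hTapply, sub_eq_zero] at hB
    have key : ∀ i, ((q i • ((U i)ᴴ * B * U i))ᴴ * (q i • ((U i)ᴴ * B * U i))).trace
        = (q i * q i) • (Bᴴ * B).trace := by
      intro i
      rw [Matrix.conjTranspose_smul, star_trivial, Matrix.smul_mul, Matrix.mul_smul,
        smul_smul, Matrix.trace_smul, htraceconj i B]
    have heq : (q i0 * q i0) • (Bᴴ * B).trace = (q i1 * q i1) • (Bᴴ * B).trace := by
      rw [← key i0, ← key i1, hB]
    have ht0 : (Bᴴ * B).trace = 0 := by
      rw [← sub_eq_zero, ← sub_smul] at heq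
      rcases smul_eq_zero.mp heq with h | h
      · exfalso
        nlinarith [hqpos i0, hqpos i1, hq0, hq1, hεpos]
      · exact h
    exact (trace_conjTranspose_mul_self_eq_zero_iff B).mp ht0
  obtain ⟨B1, hB1⟩ := (LinearMap.injective_iff_surjective).mp hTinj Y
  set B : Matrix n n ℂ := (1/2 : ℝ) • (B1 + B1ᴴ) with hBdef
  have hTconj : T (B1ᴴ) = (T B1)ᴴ := by
    rw [hTapply, hTapply, Matrix.conjTranspose_sub, Matrix.conjTranspose_smul,
      Matrix.conjTranspose_smul, star_trivial, star_trivial,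
      conjTranspose_conj_mul, conjTranspose_conj_mul]
  have hBHerm : B.IsHermitian := by
    unfold Matrix.IsHermitian
    rw [hBdef, Matrix.conjTranspose_smul, star_trivial, Matrix.conjTranspose_add,
      Matrix.conjTranspose_conjTranspose, add_comm]
  have hTB : T B = Y := by
    rw [hBdef, map_smul, map_add, hTconj, hB1, hY.eq]
    have h2 : Y + Y = (2:ℝ) • Y := (two_smul ℝ Y).symm
    rw [h2, smul_smul]
    norm_num
  set K : ℝ := ∑ a, ∑ b, ‖B a b‖ with hK
  have hKnonneg : 0 ≤ K := by
    rw [hK]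
    exact Finset.sum_nonneg fun a _ => Finset.sum_nonneg fun b _ => norm_nonneg _
  set c : ℝ := α / (2 * (K + 1)) with hc
  have hcpos : 0 < c := by rw [hc]; positivity
  have hcK : c * K ≤ α / 2 := by
    rw [hc, div_mul_eq_mul_div, div_le_div_iff₀ (by positivity) (by norm_num)]
    nlinarith [hαpos, hKnonneg]
  set γ : Fin (N+1) → ℝ := fun i => (if i = i0 then c else 0) - (if i = i1 then c else 0)
    with hγdef
  set E : Fin (N+1) → Matrix n n ℂ := fun i => α • (1 : Matrix n n ℂ) + (γ i) • B with hEdef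
  refine ⟨q, E, c, hcpos, hqpos, hqsum, ?_, ?_, ?_⟩
  · intro i
    have habs : |γ i| ≤ c := by
      rw [hγdef]
      dsimp only
      split_ifs <;> simp [abs_neg, abs_of_nonneg hcpos.le, hcpos.le]
    have hsmall : |γ i| * K ≤ α / 2 :=
      le_trans (mul_le_mul_of_nonneg_right habs hKnonneg) hcK
    rw [hEdef]
    exact posDef_one_add_smul hBHerm α (γ i) hαpos (by rw [← hK]; exact hsmall)
  · rw [hEdef]
    rw [Finset.sum_add_distrib]
    have h1 : ∑ _i : Fin (N+1), α • (1 : Matrix n n ℂ) = (1 : Matrix n n ℂ) := by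
      rw [Finset.sum_const, Finset.card_univ, Fintype.card_fin,
        ← Nat.cast_smul_eq_nsmul ℝ, smul_smul, hα]
      push_cast
      rw [mul_inv_cancel₀ (by positivity), one_smul]
    have h2 : ∑ i, γ i • B = 0 := by
      rw [← Finset.sum_smul]
      have hγsum : ∑ i, γ i = 0 := by
        rw [hγdef]
        rw [Finset.sum_sub_distrib,
          Finset.sum_ite_eq' Finset.univ i0 (fun _ => c),
          Finset.sum_ite_eq' Finset.univ i1 (fun _ => c)]
        simp
      rw [hγsum, zero_smul]
    rw [h1, h2, add_zero]
  · have hEU : ∀ i, q i • ((U i)ᴴ * E i * U i)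
        = (q i * α) • (1 : Matrix n n ℂ) + (q i * γ i) • ((U i)ᴴ * B * U i) := by
      intro i
      rw [hEdef]
      dsimp only
      rw [Matrix.mul_add, Matrix.add_mul, Matrix.mul_smul, Matrix.smul_mul,
        Matrix.mul_smul, Matrix.smul_mul, Matrix.mul_one, hUs i, smul_add,
        smul_smul, smul_smul]
    calc ∑ i, q i • ((U i)ᴴ * E i * U i)
        = ∑ i, ((q i * α) • (1 : Matrix n n ℂ) + (q i * γ i) • ((U i)ᴴ * B * U i)) :=
          Finset.sum_congr rfl fun i _ => hEU i
      _ = (∑ i, (q i * α) • (1 : Matrix n n ℂ))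
          + ∑ i, (q i * γ i) • ((U i)ᴴ * B * U i) := Finset.sum_add_distrib
      _ = α • (1 : Matrix n n ℂ) + c • Y := by
          congr 1
          · rw [← Finset.sum_smul, ← Finset.sum_mul, hqsum, one_mul]
          · have hqγ : ∀ i, (q i * γ i) • ((U i)ᴴ * B * U i)
                = (if i = i0 then (c * q i0) • ((U i0)ᴴ * B * U i0) else 0)
                  - (if i = i1 then (c * q i1) • ((U i1)ᴴ * B * U i1) else 0) := by
              intro i
              rw [hγdef]
              dsimp only
              split_ifs with h1 h2 h3
              · exact absurd (h1.symm.trans h2) hne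
              · subst h1
                rw [sub_zero, sub_zero, mul_comm (q i0) c]
              · subst h3
                rw [zero_sub, zero_sub, mul_neg, neg_smul, mul_comm (q i1) c]
              · simp
            calc ∑ i, (q i * γ i) • ((U i)ᴴ * B * U i)
                = ∑ i, ((if i = i0 then (c * q i0) • ((U i0)ᴴ * B * U i0) else 0)
                    - (if i = i1 then (c * q i1) • ((U i1)ᴴ * B * U i1) else 0)) :=
                  Finset.sum_congr rfl fun i _ => hqγ i
              _ = (c * q i0) • ((U i0)ᴴ * B * U i0)
                  - (c * q i1) • ((U i1)ᴴ * B * U i1) := by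
                  rw [Finset.sum_sub_distrib, Finset.sum_ite_eq' Finset.univ i0,
                    Finset.sum_ite_eq' Finset.univ i1]
                  simp
              _ = c • Y := by
                  rw [← smul_smul, ← smul_smul, ← smul_sub, ← hTapply B, hTB]

end Construction2


section TaskValue
variable {n : Type} [Fintype n] [DecidableEq n]

lemma task_value {N : ℕ} (U : Fin (N+1) → Matrix n n ℂ) (q : Fin (N+1) → ℝ)
    (E : Fin (N+1) → Matrix n n ℂ) (c α : ℝ) (Y : Matrix n n ℂ)
    (hid : ∑ i, q i • ((U i)ᴴ * E i * U i) = α • (1 : Matrix n n ℂ) + c • Y)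
    (κ : Matrix n n ℂ) :
    ∑ i, q i * (E i * (U i * κ * (U i)ᴴ)).trace.re
      = α * κ.trace.re + c * (Y * κ).trace.re := by
  have hcyc : ∀ i, (E i * (U i * κ * (U i)ᴴ)).trace = (((U i)ᴴ * E i * U i) * κ).trace := by
    intro i
    have h1 : E i * (U i * κ * (U i)ᴴ) = (E i * U i * κ) * (U i)ᴴ := by noncomm_ring
    rw [h1, Matrix.trace_mul_comm]
    have h2 : (U i)ᴴ * (E i * U i * κ) = ((U i)ᴴ * E i * U i) * κ := by noncomm_ring
    rw [h2]
  calc ∑ i, q i * (E i * (U i * κ * (U i)ᴴ)).trace.re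
      = ∑ i, ((q i • (((U i)ᴴ * E i * U i) * κ)).trace.re) := by
        refine Finset.sum_congr rfl fun i _ => ?_
        rw [Matrix.trace_smul, hcyc i, Complex.real_smul, Complex.re_ofReal_mul]
    _ = ((∑ i, q i • ((U i)ᴴ * E i * U i)) * κ).trace.re := by
        rw [Finset.sum_mul, Matrix.trace_sum, Complex.re_sum]
        refine Finset.sum_congr rfl fun i _ => ?_
        rw [Matrix.smul_mul]
    _ = ((α • (1:Matrix n n ℂ) + c • Y) * κ).trace.re := by rw [hid]
    _ = α * κ.trace.re + c * (Y * κ).trace.re := by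
        rw [Matrix.add_mul, Matrix.smul_mul, Matrix.smul_mul, Matrix.one_mul,
          Matrix.trace_add, Matrix.trace_smul, Matrix.trace_smul, Complex.add_re,
          Complex.real_smul, Complex.real_smul, Complex.re_ofReal_mul,
          Complex.re_ofReal_mul]

end TaskValue

end Aux

instance instLocallyConvexMatrix {m' n' : Type} : LocallyConvexSpace ℝ (Matrix m' n' ℂ) :=
  show LocallyConvexSpace ℝ (m' → n' → ℂ) from inferInstance

end RMP


namespace RMP

/-- The number of levels `d_X` of the subsystem `X`. -/
abbrev dimX {ι : Type} [Fintype ι] [DecidableEq ι]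
    (d : ι → Type) [∀ i, Fintype (d i)] [∀ i, DecidableEq (d i)]
    (X : Finset ι) : ℕ :=
  Fintype.card (∀ i : X, d i.1)

/-- Success probability `P_D(κ_Λ, 𝒰)` of a subchannel discrimination task
`D = (p, q, E)` for the unitaries `𝒰 = U` on the family of states `κ_Λ`. -/
noncomputable def successProb {ι : Type} [Fintype ι] [DecidableEq ι]
    (d : ι → Type) [∀ i, Fintype (d i)] [∀ i, DecidableEq (d i)]
    (Λ : Finset (Finset ι))
    (U : ∀ X : Λ, Fin (dimX d X.1 + 1) → SubMat d X.1)
    (p : Λ → ℝ) (q : ∀ X : Λ, Fin (dimX d X.1 + 1) → ℝ)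
    (E : ∀ X : Λ, Fin (dimX d X.1 + 1) → SubMat d X.1)
    (κ : ∀ X : Λ, SubMat d X.1) : ℝ :=
  ∑ X : Λ, ∑ i : Fin (dimX d X.1 + 1),
    p X * q X i * (E X i * (U X i * κ X * (U X i)ᴴ)).trace.re

/-- Theorem 2 of the paper, "Advantage in Channel Discrimination".
Under Assumptions (A1) and (A2), a family of marginal states `σ_Λ` is `R`-free
incompatible iff for every family of `d_X + 1` unitaries on each `X ∈ Λ` there is a
strictly positive subchannel discrimination task in which `σ_Λ` strictly outperforms
every member of `C_{R|T,Λ}`. -/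
theorem rFree_incompatible_iff_discrimination_advantage
    {ι : Type} [Fintype ι] [DecidableEq ι]
    (d : ι → Type) [∀ i, Fintype (d i)] [∀ i, DecidableEq (d i)] [∀ i, Nonempty (d i)]
    (Λ : Finset (Finset ι)) (T : Finset ι) (F : Set (SubMat d T))
    (hF : ∀ η ∈ F, IsState η)
    (hA1 : Convex ℝ F ∧ IsCompact F)
    (hA2 : ∃ ρ : GlobalMat d, IsState ρ ∧ ptrace d T ρ ∈ F ∧
      ∀ X : Λ, (ptrace d X.1 ρ).PosDef)
    (σ : ∀ X : Λ, SubMat d X.1) (hσ : ∀ X : Λ, IsState (σ X)) :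
    σ ∉ CRT d Λ T F ↔
      ∀ U : ∀ X : Λ, Fin (dimX d X.1 + 1) → SubMat d X.1,
        (∀ (X : Λ) (i : Fin (dimX d X.1 + 1)),
          U X i ∈ Matrix.unitaryGroup (∀ j : X.1, d j.1) ℂ) →
        ∃ (p : Λ → ℝ) (q : ∀ X : Λ, Fin (dimX d X.1 + 1) → ℝ)
          (E : ∀ X : Λ, Fin (dimX d X.1 + 1) → SubMat d X.1),
          (∀ X : Λ, 0 < p X) ∧ (∑ X : Λ, p X = 1) ∧
          (∀ (X : Λ) (i : Fin (dimX d X.1 + 1)), 0 < q X i) ∧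
          (∀ X : Λ, ∑ i : Fin (dimX d X.1 + 1), q X i = 1) ∧
          (∀ (X : Λ) (i : Fin (dimX d X.1 + 1)), (E X i).PosDef) ∧
          (∀ X : Λ, ∑ i : Fin (dimX d X.1 + 1), E X i = 1) ∧
          sSup {r : ℝ | ∃ τ ∈ CRT d Λ T F, r = successProb d Λ U p q E τ}
            < successProb d Λ U p q E σ := by
  classical
  obtain ⟨ρ0, hρ0state, hρ0F, _⟩ := hA2
  have hτ0 : (fun X : Λ => ptrace d X.1 ρ0) ∈ CRT d Λ T F :=
    ⟨ρ0, hρ0state, fun X => rfl, hρ0F⟩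
  have hcomp : IsCompact (CRT d Λ T F) := crt_compact d Λ T F hA1.2
  constructor
  · intro hσn U hUni
    have hΛne : Nonempty Λ := by
      by_contra h
      exact hσn ⟨ρ0, hρ0state, fun X => (h ⟨X⟩).elim, hρ0F⟩
    have hconv : Convex ℝ (CRT d Λ T F) := crt_convex d Λ T F hA1.1
    obtain ⟨f, u, hfu, hufσ⟩ :=
      geometric_hahn_banach_closed_point hconv hcomp.isClosed hσn
    set W := repW d Λ f with hW
    set Y : ∀ X : Λ, SubMat d X.1 := fun X => (1/2 : ℝ) • (W X + (W X)ᴴ) with hYdef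
    have hYHerm : ∀ X, (Y X).IsHermitian := by
      intro X
      unfold Matrix.IsHermitian
      rw [hYdef]
      dsimp only
      rw [Matrix.conjTranspose_smul, star_trivial, Matrix.conjTranspose_add,
        Matrix.conjTranspose_conjTranspose, add_comm]
    have hg : ∀ (τ : ∀ X : Λ, SubMat d X.1), (∀ X, (τ X).IsHermitian) →
        ∑ X : Λ, ((Y X) * (τ X)).trace.re = f τ := by
      intro τ hτ
      rw [repW_spec d Λ f τ]
      refine Finset.sum_congr rfl fun X _ => ?_
      rw [hYdef]
      dsimp only
      rw [Matrix.smul_mul, Matrix.trace_smul, Matrix.add_mul, Matrix.trace_add,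
        Complex.real_smul, Complex.re_ofReal_mul, Complex.add_re,
        trace_conjTranspose_mul_re (W X) (hτ X)]
      rw [hW]
      ring
    have hcons : ∀ X : Λ, ∃ (q : Fin (dimX d X.1 + 1) → ℝ)
        (E : Fin (dimX d X.1 + 1) → SubMat d X.1) (c : ℝ),
        0 < c ∧ (∀ i, 0 < q i) ∧ (∑ i, q i) = 1 ∧ (∀ i, (E i).PosDef) ∧ (∑ i, E i) = 1 ∧
        ∑ i, q i • ((U X i)ᴴ * E i * U X i)
          = ((dimX d X.1 + 1 : ℝ)⁻¹) • (1 : SubMat d X.1) + c • Y X := by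
      intro X
      exact construction Fintype.card_pos (U X) (hUni X) (hYHerm X)
    choose q E c hcpos hqpos hqsum hEpd hEsum hid using hcons
    have hΛune : (Finset.univ : Finset Λ).Nonempty := Finset.univ_nonempty
    set Sc : ℝ := ∑ X : Λ, (c X)⁻¹ with hSc
    have hScpos : 0 < Sc :=
      Finset.sum_pos (fun X _ => inv_pos.mpr (hcpos X)) hΛune
    set p : Λ → ℝ := fun X => (c X)⁻¹ / Sc with hpdef
    set γ0 : ℝ := Sc⁻¹ with hγ0
    have hγ0pos : 0 < γ0 := inv_pos.mpr hScpos
    have hppos : ∀ X, 0 < p X := fun X =>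
      div_pos (inv_pos.mpr (hcpos X)) hScpos
    have hpsum : ∑ X : Λ, p X = 1 := by
      rw [hpdef, ← Finset.sum_div, ← hSc, div_self hScpos.ne']
    have hpc : ∀ X, p X * c X = γ0 := by
      intro X
      rw [hpdef, hγ0]
      dsimp only
      rw [div_mul_eq_mul_div, inv_mul_cancel₀ (hcpos X).ne', one_div]
    set β : ℝ := ∑ X : Λ, p X * ((dimX d X.1 : ℝ) + 1)⁻¹ with hβ
    have hval : ∀ (κ : ∀ X : Λ, SubMat d X.1), (∀ X, (κ X).trace = 1) →
        successProb d Λ U p q E κ = β + γ0 * ∑ X : Λ, ((Y X) * (κ X)).trace.re := by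
      intro κ hκ
      rw [successProb]
      calc ∑ X : Λ, ∑ i, p X * q X i * (E X i * (U X i * κ X * (U X i)ᴴ)).trace.re
          = ∑ X : Λ, (p X * ((dimX d X.1 : ℝ) + 1)⁻¹
              + γ0 * ((Y X) * (κ X)).trace.re) := by
            refine Finset.sum_congr rfl fun X _ => ?_
            have h1 : ∑ i, p X * q X i * (E X i * (U X i * κ X * (U X i)ᴴ)).trace.re
                = p X * ∑ i, q X i * (E X i * (U X i * κ X * (U X i)ᴴ)).trace.re := by
              rw [Finset.mul_sum]
              exact Finset.sum_congr rfl fun i _ => by ring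
            rw [h1, task_value (U X) (q X) (E X) (c X) _ (Y X) (hid X) (κ X)]
            rw [hκ X, Complex.one_re]
            have h2 : p X * (((dimX d X.1 : ℝ) + 1)⁻¹ * 1
                + c X * ((Y X) * (κ X)).trace.re)
                = p X * ((dimX d X.1 : ℝ) + 1)⁻¹
                  + (p X * c X) * ((Y X) * (κ X)).trace.re := by ring
            rw [show ((dimX d X.1 + 1 : ℝ))⁻¹ = (((dimX d X.1 : ℝ)) + 1)⁻¹ by push_cast; ring]
            rw [h2, hpc X]
        _ = β + γ0 * ∑ X : Λ, ((Y X) * (κ X)).trace.re := by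
            rw [Finset.sum_add_distrib, ← Finset.mul_sum, hβ]
    refine ⟨p, q, E, hppos, hpsum, hqpos, hqsum, hEpd, hEsum, ?_⟩
    have hσval : successProb d Λ U p q E σ = β + γ0 * f σ := by
      rw [hval σ (fun X => (hσ X).2), hg σ (fun X => (hσ X).1.1)]
    have hub : sSup {r : ℝ | ∃ τ ∈ CRT d Λ T F, r = successProb d Λ U p q E τ}
        ≤ β + γ0 * u := by
      apply csSup_le
      · exact ⟨successProb d Λ U p q E (fun X => ptrace d X.1 ρ0), _, hτ0, rfl⟩
      · rintro r ⟨τ, hτ, rfl⟩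
        have hst := crt_mem_isState d Λ T F hτ
        rw [hval τ (fun X => (hst X).2), hg τ (fun X => (hst X).1.1)]
        have := hfu τ hτ
        nlinarith [hγ0pos]
    refine lt_of_le_of_lt hub ?_
    rw [hσval]
    nlinarith [hγ0pos, hufσ]
  · intro h hσmem
    obtain ⟨p, q, E, hp, hps, hq, hqs, hEpd, hEs, hlt⟩ :=
      h (fun X _ => (1 : SubMat d X.1)) (fun X i => one_mem _)
    set U : ∀ X : Λ, Fin (dimX d X.1 + 1) → SubMat d X.1 := fun X _ => 1 with hU
    have hcont : Continuous (fun κ : ∀ X : Λ, SubMat d X.1 =>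
        successProb d Λ U p q E κ) := by
      apply continuous_finset_sum
      intro X _
      apply continuous_finset_sum
      intro i _
      apply Continuous.mul continuous_const
      apply Complex.continuous_re.comp
      apply Continuous.matrix_trace
      exact continuous_const.matrix_mul
        ((continuous_const.matrix_mul (continuous_apply X)).matrix_mul continuous_const)
    have him : {r : ℝ | ∃ τ ∈ CRT d Λ T F, r = successProb d Λ U p q E τ}
        = (fun κ => successProb d Λ U p q E κ) '' CRT d Λ T F := by
      ext r
      simp [Set.mem_image, eq_comm]
    have hbdd : BddAbove {r : ℝ | ∃ τ ∈ CRT d Λ T F, r = successProb d Λ U p q E τ} := by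
      rw [him]
      exact (hcomp.image hcont).bddAbove
    have hmem : successProb d Λ U p q E σ
        ∈ {r : ℝ | ∃ τ ∈ CRT d Λ T F, r = successProb d Λ U p q E τ} :=
      ⟨σ, hσmem, rfl⟩
    exact absurd (le_csSup hbdd hmem) (not_le.mpr hlt)


end RMP
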